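/- Let T ∈ ℝ^{n×n} and let H ∈ ℝ^{n×n} be symmetric (Hᵀ = H). Set T̃ = [[T, H],[0, −Tᵀ]]. Then exp(T̃) = [[F, D],[0, F⁻ᵀ]] where F = exp(T), F⁻ᵀ = (Fᵀ)⁻¹ = exp(−Tᵀ), and D = L_exp(T, −Tᵀ, H); moreover F⁻¹·D is symmetric. -/

import Mathlib

open scoped Matrix

open NormedSpace

/-- `L_exp(A, B, E)` is the `(1,2)` block of `exp [[A, E],[0, B]]`, over `ℝ`. -/
noncomputable def Lexp {n d : ℕ} (A : Matrix (Fin n) (Fin n) ℝ) (B : Matrix (Fin d) (Fin d) ℝ)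
    (E : Matrix (Fin n) (Fin d) ℝ) : Matrix (Fin n) (Fin d) ℝ :=
  (NormedSpace.exp (Matrix.fromBlocks A E 0 B)).toBlocks₁₂

section Aux

variable {n d : ℕ}

lemma pow_fromBlocks (A : Matrix (Fin n) (Fin n) ℝ) (B : Matrix (Fin d) (Fin d) ℝ)
    (E : Matrix (Fin n) (Fin d) ℝ) (k : ℕ) :
    (Matrix.fromBlocks A E 0 B) ^ k =
      Matrix.fromBlocks (A ^ k) (((Matrix.fromBlocks A E 0 B) ^ k).toBlocks₁₂) 0 (B ^ k) := by
  induction k with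
  | zero =>
      simp only [pow_zero]
      have h0 : (Matrix.toBlocks₁₂ (1 : Matrix (Fin n ⊕ Fin d) (Fin n ⊕ Fin d) ℝ)) = 0 := by
        rw [← Matrix.fromBlocks_one, Matrix.toBlocks_fromBlocks₁₂]
      rw [h0, Matrix.fromBlocks_one]
  | succ k ih =>
      have h1 : (Matrix.fromBlocks A E 0 B) ^ (k + 1) =
          Matrix.fromBlocks (A ^ (k + 1))
            (A ^ k * E + ((Matrix.fromBlocks A E 0 B) ^ k).toBlocks₁₂ * B) 0 (B ^ (k + 1)) := by
        rw [pow_succ, ih, Matrix.fromBlocks_multiply]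
        simp [pow_succ]
      have h2 : ((Matrix.fromBlocks A E 0 B) ^ (k + 1)).toBlocks₁₂ =
          A ^ k * E + ((Matrix.fromBlocks A E 0 B) ^ k).toBlocks₁₂ * B := by
        rw [h1, Matrix.toBlocks_fromBlocks₁₂]
      rw [h1]
      rw [Matrix.toBlocks_fromBlocks₁₂]

lemma hasSum_exp_matrix {m : Type*} [Fintype m] [DecidableEq m] (M : Matrix m m ℝ) :
    HasSum (fun k : ℕ => ((Nat.factorial k : ℝ))⁻¹ • M ^ k) (NormedSpace.exp M) := by
  letI : SeminormedRing (Matrix m m ℝ) := Matrix.linftyOpSemiNormedRing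
  letI : NormedRing (Matrix m m ℝ) := Matrix.linftyOpNormedRing
  letI : NormedAlgebra ℝ (Matrix m m ℝ) := Matrix.linftyOpNormedAlgebra
  exact exp_series_hasSum_exp' (𝕂 := ℝ) M

lemma exp_fromBlocks (A : Matrix (Fin n) (Fin n) ℝ) (B : Matrix (Fin d) (Fin d) ℝ)
    (E : Matrix (Fin n) (Fin d) ℝ) :
    NormedSpace.exp (Matrix.fromBlocks A E 0 B) =
      Matrix.fromBlocks (NormedSpace.exp A) (Lexp A B E) 0 (NormedSpace.exp B) := by
  set M := Matrix.fromBlocks A E 0 B with hM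
  have hsM := hasSum_exp_matrix M
  have hsA := hasSum_exp_matrix A
  have hsB := hasSum_exp_matrix B
  have hMe : ∀ (i j : Fin n ⊕ Fin d),
      HasSum (fun k : ℕ => ((Nat.factorial k : ℝ))⁻¹ • (M ^ k) i j)
        (NormedSpace.exp M i j) := by
    intro i j
    have := Pi.hasSum.mp (Pi.hasSum.mp hsM i) j
    simpa using this
  ext i j
  cases i with
  | inl i =>
      cases j with
      | inl j =>
          have h1 := hMe (Sum.inl i) (Sum.inl j)
          have h2 := Pi.hasSum.mp (Pi.hasSum.mp hsA i) j
          have hfun : (fun k : ℕ => ((Nat.factorial k : ℝ))⁻¹ • (M ^ k) (Sum.inl i) (Sum.inl j)) =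
              fun k : ℕ => (((Nat.factorial k : ℝ))⁻¹ • A ^ k) i j := by
            funext k
            rw [hM, pow_fromBlocks A B E k]
            simp [Matrix.fromBlocks_apply₁₁]
          rw [hfun] at h1
          have h2' : HasSum (fun k : ℕ => (((Nat.factorial k : ℝ))⁻¹ • A ^ k) i j)
              (NormedSpace.exp A i j) := by simpa using h2
          have := h1.unique h2'
          simpa [Matrix.fromBlocks_apply₁₁] using this
      | inr j =>
          simp [Matrix.fromBlocks_apply₁₂, Lexp, Matrix.toBlocks₁₂, ← hM]
  | inr i =>
      cases j with
      | inl j =>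
          have h1 := hMe (Sum.inr i) (Sum.inl j)
          have hfun : (fun k : ℕ => ((Nat.factorial k : ℝ))⁻¹ • (M ^ k) (Sum.inr i) (Sum.inl j)) =
              fun _ : ℕ => (0 : ℝ) := by
            funext k
            rw [hM, pow_fromBlocks A B E k]
            simp [Matrix.fromBlocks_apply₂₁]
          rw [hfun] at h1
          have := h1.unique hasSum_zero
          simpa [Matrix.fromBlocks_apply₂₁] using this
      | inr j =>
          have h1 := hMe (Sum.inr i) (Sum.inr j)
          have h2 := Pi.hasSum.mp (Pi.hasSum.mp hsB i) j
          have hfun : (fun k : ℕ => ((Nat.factorial k : ℝ))⁻¹ • (M ^ k) (Sum.inr i) (Sum.inr j)) =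
              fun k : ℕ => (((Nat.factorial k : ℝ))⁻¹ • B ^ k) i j := by
            funext k
            rw [hM, pow_fromBlocks A B E k]
            simp [Matrix.fromBlocks_apply₂₂]
          rw [hfun] at h1
          have h2' : HasSum (fun k : ℕ => (((Nat.factorial k : ℝ))⁻¹ • B ^ k) i j)
              (NormedSpace.exp B i j) := by simpa using h2
          have := h1.unique h2'
          simpa [Matrix.fromBlocks_apply₂₂] using this

end Aux

/-- For `T̃ = [[T, H],[0, −Tᵀ]]` with `H` symmetric, `exp(T̃) = [[F, D],[0, F⁻ᵀ]]` with
`F = exp(T)`, `F⁻ᵀ = (Fᵀ)⁻¹ = exp(−Tᵀ)`, and `D = L_exp(T, −Tᵀ, H)`; moreover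
`F⁻¹ ⬝ D` is symmetric. -/
theorem exp_blockTriangular_hamiltonian {n : ℕ} (T H : Matrix (Fin n) (Fin n) ℝ)
    (hH : Hᵀ = H) :
    NormedSpace.exp (Matrix.fromBlocks T H 0 (-Tᵀ)) =
      Matrix.fromBlocks (NormedSpace.exp T) (Lexp T (-Tᵀ) H) 0 ((NormedSpace.exp T)ᵀ)⁻¹ ∧
    ((NormedSpace.exp T)ᵀ)⁻¹ = NormedSpace.exp (-Tᵀ) ∧
    ((NormedSpace.exp T)⁻¹ * Lexp T (-Tᵀ) H)ᵀ =
      (NormedSpace.exp T)⁻¹ * Lexp T (-Tᵀ) H := by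
  have hinv : ((NormedSpace.exp T)ᵀ)⁻¹ = NormedSpace.exp (-Tᵀ) := by
    rw [Matrix.exp_neg, Matrix.exp_transpose]
  have hblock : NormedSpace.exp (Matrix.fromBlocks T H 0 (-Tᵀ)) =
      Matrix.fromBlocks (NormedSpace.exp T) (Lexp T (-Tᵀ) H) 0 ((NormedSpace.exp T)ᵀ)⁻¹ := by
    rw [exp_fromBlocks, hinv]
  refine ⟨hblock, hinv, ?_⟩
  -- symplectic argument
  set M := Matrix.fromBlocks T H 0 (-Tᵀ) with hMdef
  set J : Matrix (Fin n ⊕ Fin n) (Fin n ⊕ Fin n) ℝ :=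
    Matrix.fromBlocks 0 1 (-1) 0 with hJdef
  have hnegJ : -J = Matrix.fromBlocks 0 (-1) 1 0 := by
    rw [hJdef, Matrix.fromBlocks_neg]; norm_num
  have hJmul : J * (-J) = 1 := by
    rw [hnegJ, hJdef, Matrix.fromBlocks_multiply]
    simp
  have hJinv : J⁻¹ = -J := Matrix.inv_eq_right_inv hJmul
  have hJunit : IsUnit J :=
    (Matrix.isUnit_iff_isUnit_det J).mpr (Matrix.isUnit_det_of_right_inverse hJmul)
  have hnegM : -M = Matrix.fromBlocks (-T) (-H) 0 (Tᵀ) := by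
    rw [hMdef, Matrix.fromBlocks_neg]; norm_num
  have hconj : Mᵀ = J * (-M) * J⁻¹ := by
    rw [hJinv, hnegM, hnegJ, hJdef, hMdef, Matrix.fromBlocks_transpose,
      Matrix.fromBlocks_multiply, Matrix.fromBlocks_multiply]
    simp [hH, Matrix.neg_mul, Matrix.mul_neg]
  have hPt : (NormedSpace.exp M)ᵀ = J * (NormedSpace.exp M)⁻¹ * J⁻¹ := by
    calc (NormedSpace.exp M)ᵀ = NormedSpace.exp Mᵀ := (Matrix.exp_transpose M).symm
      _ = NormedSpace.exp (J * (-M) * J⁻¹) := by rw [← hconj]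
      _ = J * NormedSpace.exp (-M) * J⁻¹ := Matrix.exp_conj J (-M) hJunit
      _ = J * (NormedSpace.exp M)⁻¹ * J⁻¹ := by rw [Matrix.exp_neg]
  have hPinv : (NormedSpace.exp M)⁻¹ * NormedSpace.exp M = 1 :=
    Matrix.nonsing_inv_mul _ ((Matrix.isUnit_iff_isUnit_det _).mp (Matrix.isUnit_exp M))
  have hJJ : J⁻¹ * J = 1 := by
    rw [hJinv, Matrix.neg_mul, ← Matrix.mul_neg, hJmul]
  have hsymp : (NormedSpace.exp M)ᵀ * J * NormedSpace.exp M = J := by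
    rw [hPt]
    calc J * (NormedSpace.exp M)⁻¹ * J⁻¹ * J * NormedSpace.exp M
        = J * ((NormedSpace.exp M)⁻¹ * ((J⁻¹ * J) * NormedSpace.exp M)) := by
          noncomm_ring
      _ = J := by rw [hJJ, Matrix.one_mul, hPinv, Matrix.mul_one]
  -- now extract the (2,2) block
  set F := NormedSpace.exp T with hF
  set D := Lexp T (-Tᵀ) H with hD
  set G := NormedSpace.exp (-Tᵀ) with hG
  have hP : NormedSpace.exp M = Matrix.fromBlocks F D 0 G := by
    rw [hblock, hinv]
  rw [hP, hJdef] at hsymp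
  have h22 := congrArg Matrix.toBlocks₂₂ hsymp
  simp only [Matrix.fromBlocks_transpose, Matrix.fromBlocks_multiply,
    Matrix.toBlocks_fromBlocks₂₂, Matrix.mul_zero, Matrix.zero_mul, Matrix.mul_one,
    Matrix.one_mul, Matrix.mul_neg, Matrix.neg_mul, Matrix.transpose_zero, zero_add, add_zero,
    neg_zero] at h22
  have hGt : Gᵀ = F⁻¹ := by
    rw [hG, ← Matrix.exp_transpose, Matrix.transpose_neg, Matrix.transpose_transpose,
      Matrix.exp_neg]
  have key : Dᵀ * G = Gᵀ * D := by
    have h := h22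
    rw [neg_add_eq_zero] at h
    exact h.symm
  calc (F⁻¹ * D)ᵀ = Dᵀ * (F⁻¹)ᵀ := Matrix.transpose_mul _ _
    _ = Dᵀ * (Fᵀ)⁻¹ := by rw [Matrix.transpose_nonsing_inv]
    _ = Dᵀ * G := by rw [hinv]
    _ = Gᵀ * D := key
    _ = F⁻¹ * D := by rw [hGt]
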